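/- Let N be a nonnegative integer-valued random variable whose tail P(N > ·) is intermediate-regularly varying, and let X_1, X_2, ... be i.i.d. nonnegative light-tailed random variables with mean μ > 0, independent of N. Then P(∑_{i=1}^N X_i > b) ~ P(N > b/μ) as b → ∞, i.e., the ratio of the two probabilities tends to 1. -/

import Mathlib

open MeasureTheory Filter ProbabilityTheory

lemma aux_le_exp (u : ℝ) : u ≤ Real.exp u := by
  have := Real.add_one_le_exp u; linarith

lemma aux_exp_le (u : ℝ) (hu : 0 ≤ u) : Real.exp u ≤ 1 + u + u ^ 2 * Real.exp u := by
  have h1 : Real.exp u * (1 - u) ≤ 1 := by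
    have h := Real.add_one_le_exp (-u)
    have h2 : Real.exp u * Real.exp (-u) = 1 := by
      rw [← Real.exp_add]; simp
    nlinarith [Real.exp_pos u]
  nlinarith [Real.exp_pos u]

lemma aux_exp_neg_le (u : ℝ) (hu : 0 ≤ u) : Real.exp (-u) ≤ 1 - u + u ^ 2 := by
  have h1 : Real.exp (-u) * (1 + u) ≤ 1 := by
    have h := Real.add_one_le_exp u
    have h2 : Real.exp u * Real.exp (-u) = 1 := by rw [← Real.exp_add]; simp
    nlinarith [Real.exp_pos (-u)]
  have h3 : 1 - u ≤ Real.exp (-u) := by have := Real.add_one_le_exp (-u); linarith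
  nlinarith [Real.exp_pos (-u)]

lemma aux_exp_mul_le (x t c : ℝ) (hx : 0 ≤ x) (htc : t ≤ c) (hc : 0 ≤ c) :
    Real.exp (t * x) ≤ 1 + t * x + (t * x) ^ 2 * Real.exp (c * x) := by
  rcases le_or_gt 0 t with ht | ht
  · have h := aux_exp_le (t * x) (mul_nonneg ht hx)
    have h2 : Real.exp (t * x) ≤ Real.exp (c * x) :=
      Real.exp_le_exp.mpr (mul_le_mul_of_nonneg_right htc hx)
    nlinarith [sq_nonneg (t * x)]
  · have hu : 0 ≤ -(t * x) := by nlinarith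
    have h := aux_exp_neg_le (-(t * x)) hu
    rw [neg_neg] at h
    have h2 : (1 : ℝ) ≤ Real.exp (c * x) := by
      rw [← Real.exp_zero]; exact Real.exp_le_exp.mpr (mul_nonneg hc hx)
    nlinarith [sq_nonneg (t * x)]

lemma aux_chernoff {Ω : Type*} [MeasurableSpace Ω] (μ : Measure Ω) [IsProbabilityMeasure μ]
    (X : ℕ → Ω → ℝ) (m θ : ℝ) (hθ : 0 < θ)
    (hmeasX : ∀ i, Measurable (X i)) (hnn : ∀ i ω, 0 ≤ X i ω)
    (hiid : iIndepFun X μ)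
    (hident : ∀ i, IdentDistrib (X i) (X 0) μ μ)
    (hmean : ∫ ω, X 0 ω ∂μ = m)
    (hlt : ∫⁻ ω, ENNReal.ofReal (Real.exp (θ * X 0 ω)) ∂μ < ⊤) :
    ∃ K : ℝ, 1 ≤ K ∧
      (∀ (n : ℕ) (b t : ℝ), 0 ≤ t → t ≤ θ / 2 →
        (μ {ω | b < ∑ i ∈ Finset.range n, X i ω}).toReal
          ≤ Real.exp (-(t * b) + n * (t * m + t ^ 2 * K))) ∧
      (∀ (n : ℕ) (b s : ℝ), 0 ≤ s →
        (μ {ω | ∑ i ∈ Finset.range n, X i ω ≤ b}).toReal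
          ≤ Real.exp (s * b + n * (-(s * m) + s ^ 2 * K))) := by
  have hmeas0 := hmeasX 0
  -- integrability of exp (θ X 0)
  have hIθ : Integrable (fun ω => Real.exp (θ * X 0 ω)) μ := by
    refine ⟨(hmeas0.const_mul θ).exp.aestronglyMeasurable, ?_⟩
    simpa [HasFiniteIntegral, Real.enorm_eq_ofReal (Real.exp_pos _).le] using hlt
  -- integrability of exp (t X 0) for t ≤ θ
  have hint : ∀ t : ℝ, t ≤ θ → Integrable (fun ω => Real.exp (t * X 0 ω)) μ := by
    intro t ht
    refine ((integrable_const (1:ℝ)).add hIθ).mono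
      ((hmeas0.const_mul t).exp.aestronglyMeasurable) (ae_of_all _ fun ω => ?_)
    simp only [Pi.add_apply]
    rw [Real.norm_of_nonneg (Real.exp_pos _).le, Real.norm_of_nonneg (by positivity)]
    rcases le_or_gt t 0 with ht0 | ht0
    · have : Real.exp (t * X 0 ω) ≤ 1 := by
        rw [← Real.exp_zero]
        exact Real.exp_le_exp.mpr (mul_nonpos_of_nonpos_of_nonneg ht0 (hnn 0 ω))
      nlinarith [Real.exp_pos (θ * X 0 ω)]
    · have : Real.exp (t * X 0 ω) ≤ Real.exp (θ * X 0 ω) :=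
        Real.exp_le_exp.mpr (mul_le_mul_of_nonneg_right ht (hnn 0 ω))
      linarith
  -- integrability of X 0
  have hintX : Integrable (X 0) μ := by
    refine (hIθ.const_mul θ⁻¹).mono hmeas0.aestronglyMeasurable (ae_of_all _ fun ω => ?_)
    rw [Real.norm_of_nonneg (hnn 0 ω), Real.norm_of_nonneg (by positivity)]
    calc X 0 ω = θ⁻¹ * (θ * X 0 ω) := by field_simp
    _ ≤ θ⁻¹ * Real.exp (θ * X 0 ω) :=
      mul_le_mul_of_nonneg_left (aux_le_exp _) (inv_nonneg.mpr hθ.le)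
  -- integrability of X² exp(θ/2 X)
  have hsq : ∀ ω, (X 0 ω) ^ 2 * Real.exp (θ / 2 * X 0 ω)
      ≤ 16 / θ ^ 2 * Real.exp (θ * X 0 ω) := by
    intro ω
    set x := X 0 ω with hx
    have hx0 : 0 ≤ x := hnn 0 ω
    have h1 : x ≤ 4 / θ * Real.exp (θ / 4 * x) := by
      calc x = 4 / θ * (θ / 4 * x) := by field_simp
      _ ≤ 4 / θ * Real.exp (θ / 4 * x) :=
        mul_le_mul_of_nonneg_left (aux_le_exp _) (by positivity)
    have h2 : x ^ 2 ≤ (4 / θ) ^ 2 * Real.exp (θ / 4 * x) ^ 2 := by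
      rw [← mul_pow]
      exact pow_le_pow_left₀ hx0 h1 2
    have h3 : Real.exp (θ / 4 * x) ^ 2 = Real.exp (θ / 2 * x) := by
      rw [← Real.exp_nat_mul]; ring_nf
    rw [h3] at h2
    have h4 : x ^ 2 * Real.exp (θ / 2 * x)
        ≤ (4 / θ) ^ 2 * Real.exp (θ / 2 * x) * Real.exp (θ / 2 * x) :=
      mul_le_mul_of_nonneg_right h2 (Real.exp_pos _).le
    calc x ^ 2 * Real.exp (θ / 2 * x)
        ≤ (4 / θ) ^ 2 * (Real.exp (θ / 2 * x) * Real.exp (θ / 2 * x)) := by linarith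
    _ = 16 / θ ^ 2 * Real.exp (θ * x) := by
        rw [← Real.exp_add]; ring_nf
  have hintX2 : Integrable (fun ω => (X 0 ω) ^ 2 * Real.exp (θ / 2 * X 0 ω)) μ := by
    refine (hIθ.const_mul (16 / θ ^ 2)).mono
      ((hmeas0.pow_const 2).mul (hmeas0.const_mul (θ/2)).exp).aestronglyMeasurable
      (ae_of_all _ fun ω => ?_)
    rw [Real.norm_of_nonneg (by positivity), Real.norm_of_nonneg (by positivity)]
    exact hsq ω
  set I2 : ℝ := ∫ ω, (X 0 ω) ^ 2 * Real.exp (θ / 2 * X 0 ω) ∂μ with hI2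
  set K : ℝ := max 1 I2 with hKdef
  have hK1 : (1:ℝ) ≤ K := le_max_left _ _
  -- mgf bound
  have hmgf : ∀ t : ℝ, t ≤ θ / 2 → mgf (X 0) μ t ≤ Real.exp (t * m + t ^ 2 * K) := by
    intro t ht
    have hdom : Integrable
        (fun ω => 1 + t * X 0 ω + t ^ 2 * ((X 0 ω) ^ 2 * Real.exp (θ / 2 * X 0 ω))) μ :=
      ((integrable_const 1).add (hintX.const_mul t)).add (hintX2.const_mul (t ^ 2))
    have hpt : ∀ ω, Real.exp (t * X 0 ω)
        ≤ 1 + t * X 0 ω + t ^ 2 * ((X 0 ω) ^ 2 * Real.exp (θ / 2 * X 0 ω)) := by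
      intro ω
      have h := aux_exp_mul_le (X 0 ω) t (θ / 2) (hnn 0 ω) ht (by positivity)
      calc Real.exp (t * X 0 ω)
          ≤ 1 + t * X 0 ω + (t * X 0 ω) ^ 2 * Real.exp (θ / 2 * X 0 ω) := h
      _ = 1 + t * X 0 ω + t ^ 2 * ((X 0 ω) ^ 2 * Real.exp (θ / 2 * X 0 ω)) := by ring
    have hle := integral_mono_of_nonneg (ae_of_all _ fun ω => (Real.exp_pos _).le) hdom
      (ae_of_all _ hpt)
    have i1 : Integrable (fun ω => t * X 0 ω) μ := hintX.const_mul t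
    have i2 : Integrable (fun ω => t ^ 2 * ((X 0 ω) ^ 2 * Real.exp (θ / 2 * X 0 ω))) μ :=
      hintX2.const_mul _
    have i0 : Integrable (fun ω => 1 + t * X 0 ω) μ := (integrable_const 1).add i1
    have hval : ∫ ω, (1 + t * X 0 ω + t ^ 2 * ((X 0 ω) ^ 2 * Real.exp (θ / 2 * X 0 ω))) ∂μ
        = 1 + t * m + t ^ 2 * I2 := by
      rw [integral_add i0 i2, integral_add (integrable_const 1) i1,
        integral_const, integral_const_mul, integral_const_mul, hmean]
      simp
      exact Or.inl rfl
    have hI2K : t ^ 2 * I2 ≤ t ^ 2 * K :=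
      mul_le_mul_of_nonneg_left (le_max_right _ _) (sq_nonneg t)
    have hfin := Real.add_one_le_exp (t * m + t ^ 2 * K)
    have : mgf (X 0) μ t = ∫ ω, Real.exp (t * X 0 ω) ∂μ := rfl
    rw [this]
    rw [hval] at hle
    linarith
  -- transfer to all i
  have hmgfi : ∀ (i : ℕ) (t : ℝ), mgf (X i) μ t = mgf (X 0) μ t := by
    intro i t
    exact ((hident i).comp (measurable_id.const_mul t).exp).integral_eq
  have hinti : ∀ (i : ℕ) (t : ℝ), t ≤ θ → Integrable (fun ω => Real.exp (t * X i ω)) μ := by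
    intro i t ht
    exact ((hident i).comp (measurable_id.const_mul t).exp).integrable_iff.mpr (hint t ht)
  refine ⟨K, hK1, ?_, ?_⟩
  · -- upper chernoff
    intro n b t ht0 htθ
    have htθ' : t ≤ θ := le_trans htθ (by linarith)
    have hintsum : Integrable (fun ω => Real.exp (t * (∑ i ∈ Finset.range n, X i) ω)) μ :=
      hiid.integrable_exp_mul_sum hmeasX (fun i _ => hinti i t htθ')
    have h := measure_ge_le_exp_mul_mgf (μ := μ) (X := ∑ i ∈ Finset.range n, X i) b ht0 hintsum
    rw [hiid.mgf_sum hmeasX] at h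
    have hprod : (∏ i ∈ Finset.range n, mgf (X i) μ t) = mgf (X 0) μ t ^ n := by
      rw [Finset.prod_congr rfl (fun i _ => hmgfi i t), Finset.prod_const, Finset.card_range]
    rw [hprod] at h
    have hset : {ω | b < ∑ i ∈ Finset.range n, X i ω}
        ⊆ {ω | b ≤ (∑ i ∈ Finset.range n, X i) ω} := by
      intro ω hω
      simpa [Finset.sum_apply] using le_of_lt hω
    have h0 : (μ {ω | b < ∑ i ∈ Finset.range n, X i ω}).toReal
        ≤ (μ {ω | b ≤ (∑ i ∈ Finset.range n, X i) ω}).toReal :=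
      ENNReal.toReal_mono (measure_ne_top _ _) (measure_mono hset)
    have hpow : mgf (X 0) μ t ^ n ≤ Real.exp (t * m + t ^ 2 * K) ^ n :=
      pow_le_pow_left₀ mgf_nonneg (hmgf t htθ) n
    calc (μ {ω | b < ∑ i ∈ Finset.range n, X i ω}).toReal
        ≤ Real.exp (-t * b) * mgf (X 0) μ t ^ n := le_trans h0 h
    _ ≤ Real.exp (-t * b) * Real.exp (t * m + t ^ 2 * K) ^ n :=
        mul_le_mul_of_nonneg_left hpow (Real.exp_pos _).le
    _ = Real.exp (-(t * b) + n * (t * m + t ^ 2 * K)) := by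
        rw [← Real.exp_nat_mul, ← Real.exp_add]; ring_nf
  · -- lower chernoff
    intro n b s hs0
    have hts : -s ≤ θ := by linarith
    have hintsum : Integrable (fun ω => Real.exp (-s * (∑ i ∈ Finset.range n, X i) ω)) μ :=
      hiid.integrable_exp_mul_sum hmeasX (fun i _ => hinti i (-s) hts)
    have h := measure_le_le_exp_mul_mgf (μ := μ) (X := ∑ i ∈ Finset.range n, X i) b
      (neg_nonpos.mpr hs0) hintsum
    rw [hiid.mgf_sum hmeasX] at h
    have hprod : (∏ i ∈ Finset.range n, mgf (X i) μ (-s)) = mgf (X 0) μ (-s) ^ n := by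
      rw [Finset.prod_congr rfl (fun i _ => hmgfi i (-s)), Finset.prod_const, Finset.card_range]
    rw [hprod] at h
    have hset : {ω | ∑ i ∈ Finset.range n, X i ω ≤ b}
        ⊆ {ω | (∑ i ∈ Finset.range n, X i) ω ≤ b} := by
      intro ω hω
      simpa [Finset.sum_apply] using hω
    have h0 : (μ {ω | ∑ i ∈ Finset.range n, X i ω ≤ b}).toReal
        ≤ (μ {ω | (∑ i ∈ Finset.range n, X i) ω ≤ b}).toReal :=
      ENNReal.toReal_mono (measure_ne_top _ _) (measure_mono hset)
    have hpow : mgf (X 0) μ (-s) ^ n ≤ Real.exp (-(s * m) + s ^ 2 * K) ^ n := by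
      have := hmgf (-s) (by linarith)
      have heq : (-s) * m + (-s) ^ 2 * K = -(s * m) + s ^ 2 * K := by ring
      rw [heq] at this
      exact pow_le_pow_left₀ mgf_nonneg this n
    calc (μ {ω | ∑ i ∈ Finset.range n, X i ω ≤ b}).toReal
        ≤ Real.exp (-(-s) * b) * mgf (X 0) μ (-s) ^ n := le_trans h0 h
    _ ≤ Real.exp (-(-s) * b) * Real.exp (-(s * m) + s ^ 2 * K) ^ n :=
        mul_le_mul_of_nonneg_left hpow (Real.exp_pos _).le
    _ = Real.exp (s * b + n * (-(s * m) + s ^ 2 * K)) := by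
        rw [← Real.exp_nat_mul, ← Real.exp_add]; ring_nf

set_option maxHeartbeats 2000000 in
theorem random_sum_tail_equivalence
    {Ω : Type*} [MeasurableSpace Ω] (μ : Measure Ω) [IsProbabilityMeasure μ]
    (N : Ω → ℕ) (X : ℕ → Ω → ℝ) (m : ℝ) (hm : 0 < m)
    (hmeasN : Measurable N) (hmeasX : ∀ i, Measurable (X i))
    (hnn : ∀ i ω, 0 ≤ X i ω)
    (hiid : iIndepFun X μ)
    (hident : ∀ i, IdentDistrib (X i) (X 0) μ μ)
    (hindepN : IndepFun N (fun ω i => X i ω) μ)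
    (hmean : ∫ ω, X 0 ω ∂μ = m)
    (hlight : ∃ θ : ℝ, 0 < θ ∧ ∫⁻ ω, ENNReal.ofReal (Real.exp (θ * X 0 ω)) ∂μ < ⊤)
    (hpos : ∀ x : ℝ, 0 < (μ {ω | x < (N ω : ℝ)}).toReal)
    (hIRinf : Tendsto (fun k : ℝ => liminf (fun x : ℝ =>
          (μ {ω | k * x < (N ω : ℝ)}).toReal / (μ {ω | x < (N ω : ℝ)}).toReal) atTop)
        (nhdsWithin 1 (Set.Ioi 1)) (nhds 1))
    (hIRsup : Tendsto (fun k : ℝ => limsup (fun x : ℝ =>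
          (μ {ω | k * x < (N ω : ℝ)}).toReal / (μ {ω | x < (N ω : ℝ)}).toReal) atTop)
        (nhdsWithin 1 (Set.Ioi 1)) (nhds 1)) :
    Tendsto (fun b : ℝ =>
        (μ {ω | b < ∑ i ∈ Finset.range (N ω), X i ω}).toReal /
          (μ {ω | b / m < (N ω : ℝ)}).toReal) atTop (nhds 1) := by
  classical
  obtain ⟨θ, hθ, hlt⟩ := hlight
  obtain ⟨K, hK1, hCU, hCL⟩ := aux_chernoff μ X m θ hθ hmeasX hnn hiid hident hmean hlt
  have hK0 : (0:ℝ) < K := lt_of_lt_of_le one_pos hK1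
  set F : ℝ → ℝ := fun x => (μ {ω | x < (N ω : ℝ)}).toReal with hF
  have hFpos : ∀ x, 0 < F x := hpos
  have hFanti : Antitone F := by
    intro x y hxy
    exact ENNReal.toReal_mono (measure_ne_top _ _)
      (measure_mono (fun ω hω => lt_of_le_of_lt hxy hω))
  -- independence splitting
  have hsplit : ∀ (n : ℕ) (y b : ℝ),
      μ ({ω | y < (N ω : ℝ)} ∩ {ω | b < ∑ i ∈ Finset.range n, X i ω})
        = μ {ω | y < (N ω : ℝ)} * μ {ω | b < ∑ i ∈ Finset.range n, X i ω} := by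
    intro n y b
    have hA : {ω | y < (N ω : ℝ)} = N ⁻¹' {j : ℕ | y < (j : ℝ)} := rfl
    have hB : {ω | b < ∑ i ∈ Finset.range n, X i ω}
        = (fun ω i => X i ω) ⁻¹' {f : ℕ → ℝ | b < ∑ i ∈ Finset.range n, f i} := rfl
    rw [hA, hB]
    refine hindepN.measure_inter_preimage_eq_mul _ _ ?_ ?_
    · exact MeasurableSpace.measurableSet_top
    · exact measurableSet_lt measurable_const
        (Finset.measurable_sum _ fun i _ => measurable_pi_apply i)
  -- liminf ratios are eventually bounded below
  have hbdd : IsBoundedUnder (· ≥ ·) atTop (fun x : ℝ => F (1 * x) / F x) := by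
    exact isBoundedUnder_of ⟨0, fun x => div_nonneg ENNReal.toReal_nonneg ENNReal.toReal_nonneg⟩
  have hratm : ∀ k : ℝ, IsBoundedUnder (· ≥ ·) atTop (fun x : ℝ => F (k * x) / F x) := by
    intro k
    exact isBoundedUnder_of ⟨0, fun x => div_nonneg ENNReal.toReal_nonneg ENNReal.toReal_nonneg⟩
  -- exponential decay beats the tail of N
  have hneg : ∀ c : ℝ, 0 < c →
      Tendsto (fun b => Real.exp (-(c * b)) / F (b / m)) atTop (nhds 0) := by
    intro c hc
    have hev : ∀ᶠ k in nhdsWithin 1 (Set.Ioi 1),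
        (1:ℝ)/2 < liminf (fun x : ℝ => F (k * x) / F x) atTop :=
      hIRinf.eventually (eventually_gt_nhds (by norm_num))
    obtain ⟨k₀, hk₀L, hk₀1⟩ := (hev.and self_mem_nhdsWithin).exists
    have hk₀0 : (0:ℝ) < k₀ := lt_trans one_pos hk₀1
    have hevx : ∀ᶠ x in atTop, (1:ℝ)/2 < F (k₀ * x) / F x :=
      eventually_lt_of_lt_liminf hk₀L (hratm k₀)
    obtain ⟨x₀', hx₀'⟩ := eventually_atTop.mp hevx
    set x₀ : ℝ := max x₀' 1 with hx₀def
    have hx₀1 : (1:ℝ) ≤ x₀ := le_max_right _ _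
    have hx₀0 : (0:ℝ) < x₀ := lt_of_lt_of_le one_pos hx₀1
    have hstep : ∀ x, x₀ ≤ x → F x / 2 ≤ F (k₀ * x) := by
      intro x hx
      have h := hx₀' x (le_trans (le_max_left _ _) hx)
      have hFx := hFpos x
      rw [lt_div_iff₀ hFx] at h
      linarith
    have hiter : ∀ j : ℕ, F x₀ / 2 ^ j ≤ F (k₀ ^ j * x₀) := by
      intro j
      induction j with
      | zero => simp
      | succ j ih =>
        have hxj : x₀ ≤ k₀ ^ j * x₀ := by
          nlinarith [one_le_pow₀ hk₀1.le (n := j), hx₀0]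
        have h1 := hstep _ hxj
        have h2 : k₀ * (k₀ ^ j * x₀) = k₀ ^ (j+1) * x₀ := by ring
        rw [h2] at h1
        have h3 : F x₀ / 2 ^ (j+1) = (F x₀ / 2 ^ j) / 2 := by
          rw [div_div]; ring_nf
        rw [h3]
        linarith
    set α : ℝ := Real.log 2 / Real.log k₀ with hαdef
    have hα0 : 0 ≤ α := div_nonneg (Real.log_nonneg (by norm_num))
      (Real.log_nonneg hk₀1.le)
    set C : ℝ := 2 / F x₀ / (m * x₀) ^ α with hCdef
    have hmain : ∀ᶠ b in atTop,
        Real.exp (-(c * b)) / F (b / m) ≤ C * (b ^ α * Real.exp (-c * b)) := by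
      filter_upwards [eventually_ge_atTop (max (m * x₀) 1)] with b hb
      have hbmx : m * x₀ ≤ b := le_trans (le_max_left _ _) hb
      have hb1 : (1:ℝ) ≤ b := le_trans (le_max_right _ _) hb
      have hb0 : (0:ℝ) < b := lt_of_lt_of_le one_pos hb1
      set y : ℝ := b / (m * x₀) with hydef
      have hy1 : (1:ℝ) ≤ y := (one_le_div (by positivity)).mpr hbmx
      have hy0 : (0:ℝ) < y := lt_of_lt_of_le one_pos hy1
      set j : ℕ := ⌊Real.logb k₀ y⌋₊ + 1 with hjdef
      have hyk : y ≤ k₀ ^ j := by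
        have h1 : y = k₀ ^ Real.logb k₀ y := (Real.rpow_logb hk₀0 (ne_of_gt hk₀1) hy0).symm
        have h2 : Real.logb k₀ y ≤ (j : ℝ) := by
          have := Nat.lt_floor_add_one (Real.logb k₀ y)
          push_cast [hjdef]
          linarith
        calc y = k₀ ^ Real.logb k₀ y := h1
        _ ≤ k₀ ^ (j:ℝ) := (Real.rpow_le_rpow_left_iff hk₀1).mpr h2
        _ = k₀ ^ j := Real.rpow_natCast _ _
      have hFb : F x₀ / 2 ^ j ≤ F (b / m) := by
        have hord : b / m ≤ k₀ ^ j * x₀ := by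
          have hbm : b / m = y * x₀ := by
            rw [hydef]; field_simp
          rw [hbm]
          nlinarith
        exact le_trans (hiter j) (hFanti hord)
      have h2j : (2:ℝ) ^ j ≤ 2 * y ^ α := by
        have hfl : (j : ℝ) ≤ Real.logb k₀ y + 1 := by
          have := Nat.floor_le (Real.logb_nonneg hk₀1 hy1)
          push_cast [hjdef]
          linarith
        have e1 : (2:ℝ) ^ j = Real.exp ((j:ℝ) * Real.log 2) := by
          rw [Real.exp_nat_mul, Real.exp_log (by norm_num : (0:ℝ) < 2)]
        have e2 : y ^ α = Real.exp (Real.logb k₀ y * Real.log 2) := by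
          rw [Real.rpow_def_of_pos hy0]
          congr 1
          rw [Real.logb, hαdef]
          ring
        rw [e1]
        calc Real.exp ((j:ℝ) * Real.log 2)
            ≤ Real.exp ((Real.logb k₀ y + 1) * Real.log 2) := by
              apply Real.exp_le_exp.mpr
              have hl2 : (0:ℝ) ≤ Real.log 2 := Real.log_nonneg (by norm_num)
              nlinarith
        _ = Real.exp (Real.logb k₀ y * Real.log 2) * Real.exp (Real.log 2) := by
              rw [← Real.exp_add]; ring_nf
        _ = y ^ α * 2 := by rw [← e2, Real.exp_log (by norm_num : (0:ℝ) < 2)]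
        _ = 2 * y ^ α := by ring
      -- assemble
      have hFb0 : 0 < F x₀ / 2 ^ j := div_pos (hFpos x₀) (by positivity)
      have hinv : 1 / F (b / m) ≤ 2 ^ j / F x₀ := by
        rw [div_le_div_iff₀ (hFpos _) (hFpos _)]
        have := hFb
        rw [div_le_iff₀ (by positivity : (0:ℝ) < (2:ℝ)^j)] at this
        linarith [hFpos (b/m), hFpos x₀]
      have hyb : y ^ α = b ^ α / (m * x₀) ^ α := by
        rw [hydef, Real.div_rpow hb0.le (by positivity)]
      calc Real.exp (-(c * b)) / F (b / m)
          = Real.exp (-(c * b)) * (1 / F (b / m)) := by ring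
      _ ≤ Real.exp (-(c * b)) * (2 ^ j / F x₀) := by
          exact mul_le_mul_of_nonneg_left hinv (Real.exp_pos _).le
      _ ≤ Real.exp (-(c * b)) * (2 * y ^ α / F x₀) := by
          gcongr
      _ = C * (b ^ α * Real.exp (-c * b)) := by
          rw [hyb, hCdef]
          field_simp
    have hlim : Tendsto (fun b : ℝ => C * (b ^ α * Real.exp (-c * b))) atTop (nhds 0) := by
      have := (tendsto_rpow_mul_exp_neg_mul_atTop_nhds_zero α c hc).const_mul C
      simpa using this
    refine squeeze_zero' ?_ hmain hlim
    filter_upwards with b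
    exact div_nonneg (Real.exp_pos _).le (hFpos _).le

  -- main ε argument
  rw [Metric.tendsto_nhds]
  intro ε hε
  obtain ⟨η, hηdef⟩ : ∃ η : ℝ, η = min (ε/8) (1/8) := ⟨_, rfl⟩
  have hη0 : 0 < η := hηdef ▸ lt_min (by linarith) (by norm_num)
  have hηε : η ≤ ε/8 := hηdef ▸ min_le_left _ _
  have hη8 : η ≤ 1/8 := hηdef ▸ min_le_right _ _
  have hev1 : ∀ᶠ k in nhdsWithin 1 (Set.Ioi 1),
      1 - η < liminf (fun x : ℝ => F (k * x) / F x) atTop :=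
    hIRinf.eventually (eventually_gt_nhds (by linarith))
  obtain ⟨k, hkL, hk1⟩ := (hev1.and self_mem_nhdsWithin).exists
  have hk0 : (0:ℝ) < k := lt_trans one_pos hk1
  have hk1' : (0:ℝ) < k - 1 := by simpa using sub_pos.mpr hk1
  have hevx : ∀ᶠ x in atTop, 1 - η < F (k * x) / F x :=
    eventually_lt_of_lt_liminf hkL (hratm k)
  have hm0 : m ≠ 0 := ne_of_gt hm
  have hk0' : k ≠ 0 := ne_of_gt hk0
  have hK0' : K ≠ 0 := ne_of_gt hK0
  obtain ⟨t, htdef⟩ : ∃ t : ℝ, t = min (θ/2) ((k-1)*m/(2*K)) := ⟨_, rfl⟩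
  have ht0 : 0 < t := htdef ▸ lt_min (by linarith) (by positivity)
  obtain ⟨c₂, hc₂def⟩ : ∃ c : ℝ, c = t*(k-1)/(2*k) := ⟨_, rfl⟩
  have hc₂ : 0 < c₂ := hc₂def ▸ div_pos (mul_pos ht0 hk1') (by positivity)
  obtain ⟨s, hsdef⟩ : ∃ s : ℝ, s = (k-1)*m/(2*k*K) := ⟨_, rfl⟩
  have hs0 : 0 < s := hsdef ▸ div_pos (mul_pos hk1' hm) (by positivity)
  obtain ⟨c₁, hc₁def⟩ : ∃ c : ℝ, c = s*(k-1)/2 := ⟨_, rfl⟩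
  have hc₁ : 0 < c₁ := hc₁def ▸ div_pos (mul_pos hs0 hk1') two_pos
  -- eventual Chernoff upper bound
  have hCU' : ∀ᶠ b in atTop,
      (μ {ω | b < ∑ i ∈ Finset.range ⌊b/m/k⌋₊, X i ω}).toReal ≤ Real.exp (-(c₂*b)) := by
    filter_upwards [eventually_ge_atTop 0] with b hb
    refine (hCU ⌊b/m/k⌋₊ b t ht0.le (htdef ▸ min_le_left _ _)).trans ?_
    rw [Real.exp_le_exp]
    have hn : (⌊b/m/k⌋₊ : ℝ) ≤ b/(m*k) := by
      refine (Nat.floor_le (by positivity)).trans (le_of_eq ?_)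
      rw [div_div]
    have hco : 0 ≤ t*m + t^2*K := by positivity
    have h1 : (⌊b/m/k⌋₊:ℝ) * (t*m+t^2*K) ≤ b/(m*k) * (t*m+t^2*K) :=
      mul_le_mul_of_nonneg_right hn hco
    have ht2 : t ≤ (k-1)*m/(2*K) := htdef ▸ min_le_right _ _
    have h2tK : t*(2*K) ≤ (k-1)*m := (le_div_iff₀ (by positivity)).mp ht2
    have hcoef : -t + t/k + t^2*K/(m*k) ≤ -(t*(k-1)/(2*k)) := by
      rw [← sub_nonneg]
      have hid : -(t*(k-1)/(2*k)) - (-t + t/k + t^2*K/(m*k))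
          = ((k-1)*m - t*(2*K)) * t / (2*(m*k)) := by
        field_simp
        ring
      rw [hid]
      exact div_nonneg (mul_nonneg (by linarith) ht0.le) (by positivity)
    have hexp : b/(m*k) * (t*m+t^2*K) = (t/k + t^2*K/(m*k)) * b := by
      field_simp
    calc -(t*b) + (⌊b/m/k⌋₊:ℝ)*(t*m+t^2*K) ≤ -(t*b) + b/(m*k)*(t*m+t^2*K) := by linarith
    _ = (-t + t/k + t^2*K/(m*k)) * b := by rw [hexp]; ring
    _ ≤ (-(t*(k-1)/(2*k))) * b := mul_le_mul_of_nonneg_right hcoef hb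
    _ = -(c₂*b) := by rw [hc₂def]; ring
  -- eventual Chernoff lower bound
  have hCL' : ∀ᶠ b in atTop,
      (μ {ω | ∑ i ∈ Finset.range ⌈k*(b/m)⌉₊, X i ω ≤ b}).toReal ≤ Real.exp (-(c₁*b)) := by
    filter_upwards [eventually_ge_atTop 0] with b hb
    refine (hCL ⌈k*(b/m)⌉₊ b s hs0.le).trans ?_
    rw [Real.exp_le_exp]
    have hn : k*(b/m) ≤ (⌈k*(b/m)⌉₊ : ℝ) := Nat.le_ceil _
    have hsK : s*(2*k*K) = (k-1)*m := by
      rw [hsdef]; field_simp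
    have hsKm : s*K ≤ m := by nlinarith
    have ha : -(s*m) + s^2*K ≤ 0 := by nlinarith [hs0.le]
    have h1 : (⌈k*(b/m)⌉₊:ℝ)*(-(s*m)+s^2*K) ≤ (k*(b/m))*(-(s*m)+s^2*K) :=
      mul_le_mul_of_nonpos_right hn ha
    have hcoef : s - k*s + k*(s^2*K)/m ≤ -(s*(k-1)/2) := by
      rw [← sub_nonneg]
      have hid : -(s*(k-1)/2) - (s - k*s + k*(s^2*K)/m)
          = ((k-1)*m - s*(2*k*K))*s/(2*m) := by
        field_simp; ring
      rw [hid, hsK]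
      simp
    have hexp : (k*(b/m))*(-(s*m)+s^2*K) = (-(k*s) + k*(s^2*K)/m) * b := by
      field_simp
    calc s*b + (⌈k*(b/m)⌉₊:ℝ)*(-(s*m)+s^2*K) ≤ s*b + (k*(b/m))*(-(s*m)+s^2*K) := by linarith
    _ = (s - k*s + k*(s^2*K)/m) * b := by rw [hexp]; ring
    _ ≤ (-(s*(k-1)/2)) * b := mul_le_mul_of_nonneg_right hcoef hb
    _ = -(c₁*b) := by rw [hc₁def]; ring
  -- eventual facts
  have htend : Tendsto (fun b : ℝ => b / m) atTop atTop := tendsto_id.atTop_div_const hm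
  have htend2 : Tendsto (fun b : ℝ => b / m / k) atTop atTop := htend.atTop_div_const hk0
  have E1 : ∀ᶠ b in atTop, 1 - η < F (k * (b/m)) / F (b/m) := htend.eventually hevx
  have E2 : ∀ᶠ b in atTop, 1 - η < F (k * (b/m/k)) / F (b/m/k) := htend2.eventually hevx
  have E3 : ∀ᶠ b in atTop, Real.exp (-(c₁*b)) ≤ η := by
    have h1 : Tendsto (fun b : ℝ => -(c₁*b)) atTop atBot :=
      tendsto_neg_atTop_atBot.comp ((tendsto_const_mul_atTop_of_pos hc₁).mpr tendsto_id)
    exact (Real.tendsto_exp_atBot.comp h1).eventually (eventually_le_nhds hη0)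
  have E4 : ∀ᶠ b in atTop, Real.exp (-(c₂*b)) / F (b/m) ≤ η :=
    (hneg c₂ hc₂).eventually (eventually_le_nhds hη0)
  filter_upwards [E1, E2, E3, E4, hCU', hCL', eventually_gt_atTop 0]
    with b hE1 hE2 hE3 hE4 hcu hcl hb0
  set x : ℝ := b/m with hxdef
  have hx0 : 0 < x := div_pos hb0 hm
  set T : ℝ := (μ {ω | b < ∑ i ∈ Finset.range (N ω), X i ω}).toReal with hTdef
  -- lower bound
  have hsub1 : {ω | k*x < (N ω:ℝ)} ∩ {ω | b < ∑ i ∈ Finset.range ⌈k*x⌉₊, X i ω}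
      ⊆ {ω | b < ∑ i ∈ Finset.range (N ω), X i ω} := by
    rintro ω ⟨h1, h2⟩
    have hn : ⌈k*x⌉₊ ≤ N ω := Nat.ceil_le.mpr (le_of_lt h1)
    exact lt_of_lt_of_le h2 (Finset.sum_le_sum_of_subset_of_nonneg
      (Finset.range_subset_range.mpr hn) (fun i _ _ => hnn i ω))
  have hmono1 := measure_mono (μ := μ) hsub1
  rw [hsplit _ (k*x) b] at hmono1
  have hT1 : F (k*x) * (μ {ω | b < ∑ i ∈ Finset.range ⌈k*x⌉₊, X i ω}).toReal ≤ T := by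
    have h := ENNReal.toReal_mono (measure_ne_top _ _) hmono1
    rw [ENNReal.toReal_mul] at h
    exact h
  have hmeasS : MeasurableSet {ω | ∑ i ∈ Finset.range ⌈k*x⌉₊, X i ω ≤ b} :=
    measurableSet_le (Finset.measurable_sum _ fun i _ => hmeasX i) measurable_const
  have hcompl : {ω | b < ∑ i ∈ Finset.range ⌈k*x⌉₊, X i ω}
      = {ω | ∑ i ∈ Finset.range ⌈k*x⌉₊, X i ω ≤ b}ᶜ := by
    ext ω; simp [not_le]
  have hPB : 1 - Real.exp (-(c₁*b)) ≤
      (μ {ω | b < ∑ i ∈ Finset.range ⌈k*x⌉₊, X i ω}).toReal := by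
    rw [hcompl, prob_compl_eq_one_sub hmeasS,
      ENNReal.toReal_sub_of_le prob_le_one ENNReal.one_ne_top]
    simp only [ENNReal.toReal_one]
    linarith [hcl]
  have hB1 : 1 - η ≤ (μ {ω | b < ∑ i ∈ Finset.range ⌈k*x⌉₊, X i ω}).toReal := by
    linarith [hPB, hE3]
  have hFk : (1-η) * F x ≤ F (k*x) := by
    have h := hE1
    rw [lt_div_iff₀ (hFpos x)] at h
    linarith
  have hT2 : (1-η) * F x * (1-η) ≤ T := by
    refine le_trans (mul_le_mul hFk hB1 (by linarith) (hFpos (k*x)).le) hT1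
  have hRlow : 1 - 2*η ≤ T / F x := by
    rw [le_div_iff₀ (hFpos x)]
    nlinarith [hT2, hFpos x, sq_nonneg η]
  -- upper bound
  have hsub2 : {ω | b < ∑ i ∈ Finset.range (N ω), X i ω}
      ⊆ {ω | x/k < (N ω:ℝ)} ∪ {ω | b < ∑ i ∈ Finset.range ⌊x/k⌋₊, X i ω} := by
    intro ω hω
    by_cases hc : x/k < (N ω:ℝ)
    · exact Or.inl hc
    · right
      have hn : N ω ≤ ⌊x/k⌋₊ := Nat.le_floor (not_lt.mp hc)
      exact lt_of_lt_of_le hω (Finset.sum_le_sum_of_subset_of_nonneg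
        (Finset.range_subset_range.mpr hn) (fun i _ _ => hnn i ω))
  have hTup : T ≤ F (x/k) + Real.exp (-(c₂*b)) := by
    have h1 := (measure_mono (μ := μ) hsub2).trans (measure_union_le _ _)
    have h2 := ENNReal.toReal_mono
      (ENNReal.add_ne_top.mpr ⟨measure_ne_top _ _, measure_ne_top _ _⟩) h1
    rw [ENNReal.toReal_add (measure_ne_top _ _) (measure_ne_top _ _)] at h2
    exact h2.trans (by linarith [hcu])
  have hFk2 : F (x/k) ≤ (1+2*η) * F x := by
    have h := hE2
    have hkk : k*(x/k) = x := by field_simp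
    rw [hkk, lt_div_iff₀ (hFpos (x/k))] at h
    nlinarith [mul_le_mul_of_nonneg_left h.le (by linarith : (0:ℝ) ≤ 1+2*η),
      mul_nonneg (mul_nonneg hη0.le (by linarith : (0:ℝ) ≤ 1-2*η)) (hFpos (x/k)).le]
  have hRup : T / F x ≤ 1 + 3*η := by
    rw [div_le_iff₀ (hFpos x)]
    have h4 : Real.exp (-(c₂*b)) ≤ η * F x := by
      have h := hE4
      rw [div_le_iff₀ (hFpos x)] at h
      linarith
    linarith [hTup, hFk2, h4]
  show dist (T / F x) 1 < ε
  rw [Real.dist_eq]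
  have habs : |T / F x - 1| ≤ 3*η := abs_le.mpr ⟨by linarith, by linarith⟩
  linarith
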